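/- For Bloch-vector strategies p(0|x0x1,y) = (1 + S_{x0x1}·T_y)/2 with ‖S_{x0x1}‖ ≤ 1 and ‖T_y‖ ≤ 1 in ℝ³, the linear dimension witness satisfies W_L ≤ 2√2, and this bound is attained by S_{00} = (x̂+ŷ)/√2, S_{01} = (x̂−ŷ)/√2, S_{10} = −(x̂−ŷ)/√2, S_{11} = −(x̂+ŷ)/√2 with T_0 = x̂, T_1 = ŷ. -/
import Mathlib


/-- Euclidean dot product on ℝ³. -/
def dot3 (u v : Fin 3 → ℝ) : ℝ := ∑ i, u i * v i

/-- Bloch-vector probabilities p(0|x0x1,y) = (1 + S_{x0x1}·T_y)/2,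
    and p(1|x0x1,y) = 1 − p(0|x0x1,y). -/
noncomputable def blochProb (S : Fin 2 → Fin 2 → Fin 3 → ℝ) (T : Fin 2 → Fin 3 → ℝ)
    (x0 x1 y : Fin 2) : ℝ :=
  (1 + dot3 (S x0 x1) (T y)) / 2

/-- The linear dimension witness W_L. -/
noncomputable def WL (S : Fin 2 → Fin 2 → Fin 3 → ℝ) (T : Fin 2 → Fin 3 → ℝ) : ℝ :=
  blochProb S T 0 0 0 + blochProb S T 0 0 1 + blochProb S T 0 1 0 - blochProb S T 0 1 1
    - blochProb S T 1 0 0 + blochProb S T 1 0 1 - blochProb S T 1 1 0 - blochProb S T 1 1 1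

/-- Optimal preparations S_{00}=(x̂+ŷ)/√2, S_{01}=(x̂−ŷ)/√2, S_{10}=−(x̂−ŷ)/√2,
    S_{11}=−(x̂+ŷ)/√2. -/
noncomputable def Sopt : Fin 2 → Fin 2 → Fin 3 → ℝ
  | 0, 0 => ![1 / Real.sqrt 2, 1 / Real.sqrt 2, 0]
  | 0, 1 => ![1 / Real.sqrt 2, -(1 / Real.sqrt 2), 0]
  | 1, 0 => ![-(1 / Real.sqrt 2), 1 / Real.sqrt 2, 0]
  | 1, 1 => ![-(1 / Real.sqrt 2), -(1 / Real.sqrt 2), 0]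

/-- Optimal measurement directions T_0 = x̂, T_1 = ŷ. -/
def Topt : Fin 2 → Fin 3 → ℝ
  | 0 => ![1, 0, 0]
  | 1 => ![0, 1, 0]

lemma dot3_nonneg (u : Fin 3 → ℝ) : 0 ≤ dot3 u u := by
  simp only [dot3, Fin.sum_univ_three]
  nlinarith [mul_self_nonneg (u 0), mul_self_nonneg (u 1), mul_self_nonneg (u 2)]

lemma dot3_cs (u v : Fin 3 → ℝ) : (dot3 u v)^2 ≤ dot3 u u * dot3 v v := by
  simp only [dot3, Fin.sum_univ_three]
  nlinarith [sq_nonneg (u 0 * v 1 - u 1 * v 0), sq_nonneg (u 0 * v 2 - u 2 * v 0),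
    sq_nonneg (u 1 * v 2 - u 2 * v 1)]

lemma le_sqrt_of_sq_le {A aa : ℝ} (h : A^2 ≤ aa) : A ≤ Real.sqrt aa := by
  calc A ≤ |A| := le_abs_self A
    _ = Real.sqrt (A^2) := (Real.sqrt_sq_eq_abs A).symm
    _ ≤ Real.sqrt aa := Real.sqrt_le_sqrt h

set_option maxHeartbeats 1000000 in
theorem linear_witness_quantum_bound :
    (∀ (S : Fin 2 → Fin 2 → Fin 3 → ℝ) (T : Fin 2 → Fin 3 → ℝ),
        (∀ x0 x1, dot3 (S x0 x1) (S x0 x1) ≤ 1) → (∀ y, dot3 (T y) (T y) ≤ 1) →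
        WL S T ≤ 2 * Real.sqrt 2) ∧
    WL Sopt Topt = 2 * Real.sqrt 2 := by
  constructor
  · intro S T hS hT
    set a : Fin 3 → ℝ := fun i => S 0 0 i + S 0 1 i - S 1 0 i - S 1 1 i with ha
    set b : Fin 3 → ℝ := fun i => S 0 0 i - S 0 1 i + S 1 0 i - S 1 1 i with hb
    have hWL : WL S T = (dot3 a (T 0) + dot3 b (T 1)) / 2 := by
      simp only [WL, blochProb, dot3, Fin.sum_univ_three, ha, hb]
      ring
    have hA : dot3 a (T 0) ≤ Real.sqrt (dot3 a a) := by
      refine le_sqrt_of_sq_le ?_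
      calc (dot3 a (T 0))^2 ≤ dot3 a a * dot3 (T 0) (T 0) := dot3_cs a (T 0)
        _ ≤ dot3 a a * 1 := mul_le_mul_of_nonneg_left (hT 0) (dot3_nonneg a)
        _ = dot3 a a := mul_one _
    have hB : dot3 b (T 1) ≤ Real.sqrt (dot3 b b) := by
      refine le_sqrt_of_sq_le ?_
      calc (dot3 b (T 1))^2 ≤ dot3 b b * dot3 (T 1) (T 1) := dot3_cs b (T 1)
        _ ≤ dot3 b b * 1 := mul_le_mul_of_nonneg_left (hT 1) (dot3_nonneg b)
        _ = dot3 b b := mul_one _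
    have h00 := hS 0 0
    have h01 := hS 0 1
    have h10 := hS 1 0
    have h11 := hS 1 1
    simp only [dot3, Fin.sum_univ_three] at h00 h01 h10 h11
    have hsum : dot3 a a + dot3 b b ≤ 16 := by
      simp only [dot3, Fin.sum_univ_three, ha, hb]
      nlinarith [sq_nonneg (S 0 0 0 + S 1 1 0), sq_nonneg (S 0 0 1 + S 1 1 1),
        sq_nonneg (S 0 0 2 + S 1 1 2), sq_nonneg (S 0 1 0 + S 1 0 0),
        sq_nonneg (S 0 1 1 + S 1 0 1), sq_nonneg (S 0 1 2 + S 1 0 2)]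
    have hsa := Real.sqrt_nonneg (dot3 a a)
    have hsb := Real.sqrt_nonneg (dot3 b b)
    have hsa2 := Real.sq_sqrt (dot3_nonneg a)
    have hsb2 := Real.sq_sqrt (dot3_nonneg b)
    have hs2 := Real.sqrt_nonneg 2
    have hs22 : Real.sqrt 2 ^ 2 = 2 := Real.sq_sqrt (by norm_num)
    rw [hWL]
    nlinarith [sq_nonneg (Real.sqrt (dot3 a a) - Real.sqrt (dot3 b b)),
      sq_nonneg (Real.sqrt (dot3 a a) + Real.sqrt (dot3 b b) - 4 * Real.sqrt 2)]
  · have h22 : Real.sqrt 2 * Real.sqrt 2 = 2 := Real.mul_self_sqrt (by norm_num)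
    have h2 : Real.sqrt 2 ≠ 0 := by positivity
    simp only [WL, blochProb]
    rw [show (dot3 (Sopt 0 0) (Topt 0)) = 1/Real.sqrt 2 by simp [dot3, Fin.sum_univ_three, Sopt, Topt],
       show (dot3 (Sopt 0 0) (Topt 1)) = 1/Real.sqrt 2 by simp [dot3, Fin.sum_univ_three, Sopt, Topt],
       show (dot3 (Sopt 0 1) (Topt 0)) = 1/Real.sqrt 2 by simp [dot3, Fin.sum_univ_three, Sopt, Topt],
       show (dot3 (Sopt 0 1) (Topt 1)) = -(1/Real.sqrt 2) by simp [dot3, Fin.sum_univ_three, Sopt, Topt],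
       show (dot3 (Sopt 1 0) (Topt 0)) = -(1/Real.sqrt 2) by simp [dot3, Fin.sum_univ_three, Sopt, Topt],
       show (dot3 (Sopt 1 0) (Topt 1)) = 1/Real.sqrt 2 by simp [dot3, Fin.sum_univ_three, Sopt, Topt],
       show (dot3 (Sopt 1 1) (Topt 0)) = -(1/Real.sqrt 2) by simp [dot3, Fin.sum_univ_three, Sopt, Topt],
       show (dot3 (Sopt 1 1) (Topt 1)) = -(1/Real.sqrt 2) by simp [dot3, Fin.sum_univ_three, Sopt, Topt]]
    field_simp
    linarith [h22]
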